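/- Let f be holomorphic on Ω(c,C)^m with asymptotic expansion a, and suppose a(α) ∈ ℝ for every α ∈ [0,∞)^m. Then f(conj(z₁), …, conj(z_m)) = conj(f(z)) for all z ∈ Ω(c,C)^m (note that Ω(c,C) is stable under complex conjugation); in particular f(x) ∈ ℝ for every real point x ∈ Ω(c,C)^m ∩ ℝ^m. -/

import Mathlib

noncomputable section
open scoped Classical

/-- Logarithmic model of a standard quadratic domain:
`Ω(c,C) = {z : Re z < log c - C·√|Im z|}`. -/
def SQD (c C : ℝ) : Set ℂ := {z : ℂ | z.re < Real.log c - C * Real.sqrt |z.im|}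

/-- The cartesian power `Ω(c,C)^m`. -/
def QDom (c C : ℝ) (m : ℕ) : Set (Fin m → ℂ) := {z | ∀ i, z i ∈ SQD c C}

/-- Open disc `D_R` of radius `R` centred at `0`. -/
def Disc (R : ℝ) : Set ℂ := {w : ℂ | ‖w‖ < R}

/-- Polydisc `D_R^n`. -/
def PDisc (R : ℝ) (n : ℕ) : Set (Fin n → ℂ) := {y | ∀ j, y j ∈ Disc R}

/-- The exponential monomial `exp⟨α,z⟩`. -/
def expMono {m : ℕ} (α : Fin m → ℝ) (z : Fin m → ℂ) : ℂ :=
  Complex.exp (∑ i, (α i : ℂ) * z i)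

/-- Euclidean norm of `E(z) = (exp (Re z₁), …, exp (Re z_m))`. -/
def eNorm {m : ℕ} (z : Fin m → ℂ) : ℝ :=
  Real.sqrt (∑ i, Real.exp ((z i).re) ^ 2)

/-- A generalized power series with natural support: nonnegative exponents, and in each
coordinate the set of exponents below any bound is finite. -/
def NaturalSeries {m : ℕ} (a : (Fin m → ℝ) → ℂ) : Prop :=
  (∀ α, a α ≠ 0 → ∀ i, 0 ≤ α i) ∧
  ∀ i : Fin m, ∀ R : ℝ, 0 < R → {r : ℝ | (∃ α, a α ≠ 0 ∧ α i = r) ∧ r ≤ R}.Finite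

/-- `f` has asymptotic expansion `a` on `Ω(c,C)^m`: for every `ν > 0` there is a smaller
standard quadratic domain on which `f` minus the partial sum of weight `≤ ν` is
`o(‖E(z)‖^ν)` as `‖E(z)‖ → 0`. -/
def HasAsymExp {m : ℕ} (c C : ℝ) (f : (Fin m → ℂ) → ℂ) (a : (Fin m → ℝ) → ℂ) : Prop :=
  NaturalSeries a ∧
  ∀ ν : ℝ, 0 < ν → ∃ c' C' : ℝ, 0 < c' ∧ 0 < C' ∧ SQD c' C' ⊆ SQD c C ∧
    ∃ F : Finset (Fin m → ℝ),
      (∀ α, α ∈ F ↔ a α ≠ 0 ∧ ∑ i, α i ≤ ν) ∧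
      ∀ ε : ℝ, 0 < ε → ∃ δ : ℝ, 0 < δ ∧
        ∀ z ∈ QDom c' C' m, eNorm z < δ →
          ‖f z - ∑ α ∈ F, a α * expMono α z‖ ≤ ε * eNorm z ^ ν

section Aux
open Complex Set Filter Topology

lemma my_sqrt_add_le (x y : ℝ) : Real.sqrt (x + y) ≤ Real.sqrt x + Real.sqrt y := by
  rcases le_or_gt x 0 with hx | hx
  · calc Real.sqrt (x + y) ≤ Real.sqrt y := Real.sqrt_le_sqrt (by linarith)
      _ ≤ _ := le_add_of_nonneg_left (Real.sqrt_nonneg x)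
  rcases le_or_gt y 0 with hy | hy
  · calc Real.sqrt (x + y) ≤ Real.sqrt x := Real.sqrt_le_sqrt (by linarith)
      _ ≤ _ := le_add_of_nonneg_right (Real.sqrt_nonneg y)
  · have h1 : x + y ≤ (Real.sqrt x + Real.sqrt y)^2 := by
      nlinarith [Real.sq_sqrt hx.le, Real.sq_sqrt hy.le, Real.sqrt_nonneg x, Real.sqrt_nonneg y]
    calc Real.sqrt (x+y) ≤ Real.sqrt ((Real.sqrt x + Real.sqrt y)^2) := Real.sqrt_le_sqrt h1
      _ = _ := Real.sqrt_sq (by positivity)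

lemma my_sqrt_abs_add (a b : ℝ) : Real.sqrt |a + b| ≤ Real.sqrt |a| + Real.sqrt |b| :=
  le_trans (Real.sqrt_le_sqrt (abs_add_le a b)) (my_sqrt_add_le _ _)

lemma my_convex_lt {u v T a b : ℝ} (hu : u < T) (hv : v < T)
    (ha : 0 ≤ a) (hb : 0 ≤ b) (hab : a + b = 1) : a * u + b * v < T := by
  have hT : a * T + b * T = T := by linear_combination T * hab
  rcases eq_or_lt_of_le ha with rfl | ha'
  · have hb1 : b = 1 := by linarith
    simp [hb1, hv]
  · nlinarith [mul_lt_mul_of_pos_left hu ha', mul_le_mul_of_nonneg_left hv.le hb]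

/-- one-variable quadratic domain -/
def Om (A C : ℝ) : Set ℂ := {w : ℂ | w.re < A - C * Real.sqrt |w.im|}

lemma Om_open (A C : ℝ) : IsOpen (Om A C) :=
  isOpen_lt Complex.continuous_re (by fun_prop)

lemma Om_mono {A A' C C' : ℝ} (hA : A' ≤ A) (hC : C ≤ C') : Om A' C' ⊆ Om A C := by
  intro w hw
  have h0 : 0 ≤ Real.sqrt |w.im| := Real.sqrt_nonneg _
  simp only [Om, mem_setOf_eq] at *
  nlinarith

lemma real_mem_Om {A C : ℝ} (x : ℝ) (hx : x < A) : (x:ℂ) ∈ Om A C := by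
  simp [Om, hx]

lemma Om_preconnected {A C : ℝ} (hC : 0 ≤ C) : IsPreconnected (Om A C) := by
  apply isPreconnected_of_forall ((A - 1 : ℝ) : ℂ)
  rintro w hw
  set X : ℝ := min w.re (A - 1 - C * Real.sqrt |w.im|) - 1 with hX
  have hXw : X ≤ w.re := by
    have := min_le_left w.re (A - 1 - C * Real.sqrt |w.im|); simp only [hX]; linarith
  have hXA : X < A - C * Real.sqrt |w.im| := by
    have := min_le_right w.re (A - 1 - C * Real.sqrt |w.im|); simp only [hX]; linarith
  have hXA0 : X < A := by
    have h0 : 0 ≤ C * Real.sqrt |w.im| := mul_nonneg hC (Real.sqrt_nonneg _)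
    linarith
  set P2 : ℂ := ⟨X, w.im⟩
  set P3 : ℂ := ⟨X, 0⟩
  set P4 : ℂ := ((A - 1 : ℝ) : ℂ)
  have hw' : w.re < A - C * Real.sqrt |w.im| := hw
  refine ⟨segment ℝ w P2 ∪ (segment ℝ P2 P3 ∪ segment ℝ P3 P4), ?_, ?_, ?_, ?_⟩
  · rintro u (hu | hu | hu)
    · rcases hu with ⟨a, b, ha, hb, hab, rfl⟩
      have hre : (a • w + b • P2).re = a * w.re + b * X := by
        simp [Complex.add_re, Complex.smul_re, P2]
      have him : (a • w + b • P2).im = w.im := by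
        simp only [Complex.add_im, Complex.smul_im, P2, smul_eq_mul]
        linear_combination w.im * hab
      simp only [Om, mem_setOf_eq, hre, him]
      exact my_convex_lt hw' hXA ha hb hab
    · rcases hu with ⟨a, b, ha, hb, hab, rfl⟩
      have hre : (a • P2 + b • P3).re = X := by
        simp only [Complex.add_re, Complex.smul_re, P2, P3, smul_eq_mul]
        linear_combination X * hab
      have him : (a • P2 + b • P3).im = a * w.im := by
        simp [Complex.add_im, Complex.smul_im, P2, P3]
      simp only [Om, mem_setOf_eq, hre, him]
      have h1 : Real.sqrt |a * w.im| ≤ Real.sqrt |w.im| := by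
        apply Real.sqrt_le_sqrt
        rw [abs_mul]
        calc |a| * |w.im| ≤ 1 * |w.im| := by
              apply mul_le_mul_of_nonneg_right _ (abs_nonneg _)
              rw [_root_.abs_of_nonneg ha]; linarith
          _ = |w.im| := one_mul _
      nlinarith [mul_le_mul_of_nonneg_left h1 hC]
    · rcases hu with ⟨a, b, ha, hb, hab, rfl⟩
      have hre : (a • P3 + b • P4).re = a * X + b * (A - 1) := by
        simp [Complex.add_re, Complex.smul_re, P3, P4]
      have him : (a • P3 + b • P4).im = 0 := by
        simp [Complex.add_im, Complex.smul_im, P3, P4]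
      simp only [Om, mem_setOf_eq, hre, him, abs_zero, Real.sqrt_zero, mul_zero, sub_zero]
      exact my_convex_lt hXA0 (by linarith : A - 1 < A) ha hb hab
  · right; right; exact right_mem_segment ℝ P3 P4
  · left; exact left_mem_segment ℝ w P2
  · apply IsPreconnected.union P2
    · exact right_mem_segment ℝ w P2
    · left; exact left_mem_segment ℝ P2 P3
    · exact (convex_segment _ _).isPreconnected
    · apply IsPreconnected.union P3
      · exact right_mem_segment ℝ P2 P3
      · exact left_mem_segment ℝ P3 P4
      · exact (convex_segment _ _).isPreconnected
      · exact (convex_segment _ _).isPreconnected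

lemma my_cpow_half_re {ζ : ℂ} (h : 1 ≤ ζ.re) :
    Real.sqrt (‖ζ‖) / 2 ≤ (ζ ^ (1/2 : ℂ)).re ∧
    |(ζ ^ (1/2 : ℂ)).im| ≤ Real.sqrt (‖ζ‖) := by
  have hζ : ζ ≠ 0 := fun h0 => by rw [h0] at h; simp at h; linarith
  have hρ : 0 < ‖ζ‖ := norm_pos_iff.mpr hζ
  have hs0 : 0 ≤ Real.sqrt (‖ζ‖) := Real.sqrt_nonneg _
  rw [Complex.cpow_def_of_ne_zero hζ]
  have hre : (Complex.log ζ * (1/2 : ℂ)).re = Real.log (‖ζ‖) / 2 := by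
    simp [Complex.mul_re, Complex.log_re, Complex.log_im]
    ring
  have him : (Complex.log ζ * (1/2 : ℂ)).im = Complex.arg ζ / 2 := by
    simp [Complex.mul_im, Complex.log_re, Complex.log_im]
    ring
  have hexp : Real.exp (Real.log (‖ζ‖) / 2) = Real.sqrt (‖ζ‖) := by
    rw [← Real.log_sqrt hρ.le, Real.exp_log (Real.sqrt_pos.mpr hρ)]
  have harg : |Complex.arg ζ| ≤ Real.pi / 2 :=
    Complex.abs_arg_le_pi_div_two_iff.mpr (by linarith)
  constructor
  · rw [Complex.exp_re, hre, him, hexp]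
    have h1 : |Complex.arg ζ / 2| ≤ Real.pi / 4 := by
      rw [abs_div, _root_.abs_of_pos (by norm_num : (0:ℝ) < 2)]
      linarith
    have hcos : Real.cos (Real.pi/4) ≤ Real.cos (Complex.arg ζ / 2) := by
      rw [← Real.cos_abs (Complex.arg ζ / 2)]
      exact Real.cos_le_cos_of_nonneg_of_le_pi (abs_nonneg _)
        (by linarith [Real.pi_pos]) h1
    rw [Real.cos_pi_div_four] at hcos
    have h2 : (1:ℝ) ≤ Real.sqrt 2 := by
      rw [show (1:ℝ) = Real.sqrt 1 by simp]
      exact Real.sqrt_le_sqrt (by norm_num)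
    nlinarith
  · rw [Complex.exp_im, hre, him, hexp, abs_mul, _root_.abs_of_nonneg hs0]
    calc Real.sqrt (‖ζ‖) * |Real.sin (Complex.arg ζ / 2)|
        ≤ Real.sqrt (‖ζ‖) * 1 :=
          mul_le_mul_of_nonneg_left (Real.abs_sin_le_one _) hs0
      _ = _ := mul_one _

lemma my_psi_maps {A' C' : ℝ} (hC' : 0 < C') {ξ : ℂ} (hξ : 0 ≤ ξ.re) :
    ((A' - 1 : ℝ) : ℂ) - ξ - (((2*C'+2)^2 : ℝ) : ℂ) * (ξ + 1) ^ (1/2 : ℂ) ∈ Om A' C' := by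
  set B : ℝ := (2*C'+2)^2 with hB
  set s : ℂ := (ξ + 1) ^ (1/2:ℂ) with hs
  have hζre : 1 ≤ (ξ+1).re := by simp [Complex.add_re]; linarith
  obtain ⟨hsre, hsim⟩ := my_cpow_half_re hζre
  set ρ : ℝ := ‖ξ+1‖ with hρdef
  have hρ1 : (1:ℝ) ≤ ρ := le_trans hζre (Complex.re_le_norm _)
  have hρ0 : (0:ℝ) ≤ ρ := by linarith
  have hsqρ : 0 ≤ Real.sqrt ρ := Real.sqrt_nonneg _
  have hsq1 : 1 ≤ Real.sqrt ρ := by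
    rw [show (1:ℝ) = Real.sqrt 1 by simp]; exact Real.sqrt_le_sqrt hρ1
  have hB0 : (0:ℝ) ≤ B := by positivity
  have hsB : Real.sqrt B = 2*C'+2 := by rw [hB, Real.sqrt_sq (by linarith)]
  have himξ : |ξ.im| ≤ ρ := by
    have := Complex.abs_im_le_norm (ξ+1)
    simpa [Complex.add_im] using this
  have hwre : (((A' - 1:ℝ):ℂ) - ξ - ((B:ℝ):ℂ) * s).re = (A' - 1) - ξ.re - B * s.re := by
    simp [Complex.sub_re, Complex.re_ofReal_mul]
  have hwim : (((A' - 1:ℝ):ℂ) - ξ - ((B:ℝ):ℂ) * s).im = -ξ.im - B * s.im := by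
    simp [Complex.sub_im, Complex.im_ofReal_mul]
  rw [Om, mem_setOf_eq, hwre, hwim]
  have hsqle : Real.sqrt ρ ≤ ρ := by nlinarith [Real.sq_sqrt hρ0]
  have h1 : Real.sqrt |(-ξ.im) - B*s.im| ≤ Real.sqrt |ξ.im| + Real.sqrt (B*|s.im|) := by
    have h := my_sqrt_abs_add (-ξ.im) (-(B*s.im))
    rw [show (-ξ.im) + (-(B*s.im)) = (-ξ.im) - B*s.im by ring, abs_neg, abs_neg,
      abs_mul, _root_.abs_of_nonneg hB0] at h
    exact h
  have h2 : Real.sqrt |ξ.im| ≤ Real.sqrt ρ := Real.sqrt_le_sqrt himξ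
  have h3 : Real.sqrt (B*|s.im|) ≤ (2*C'+2) * Real.sqrt ρ := by
    calc Real.sqrt (B*|s.im|) ≤ Real.sqrt (B*ρ) := by
          apply Real.sqrt_le_sqrt
          exact mul_le_mul_of_nonneg_left (le_trans hsim hsqle) hB0
      _ = Real.sqrt B * Real.sqrt ρ := Real.sqrt_mul hB0 _
      _ = _ := by rw [hsB]
  have h4 : Real.sqrt |(-ξ.im) - B*s.im| ≤ (2*C'+3) * Real.sqrt ρ := by
    calc Real.sqrt |(-ξ.im) - B*s.im| ≤ Real.sqrt |ξ.im| + Real.sqrt (B*|s.im|) := h1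
      _ ≤ Real.sqrt ρ + (2*C'+2) * Real.sqrt ρ := add_le_add h2 h3
      _ = (2*C'+3) * Real.sqrt ρ := by ring
  have h5 : B * (Real.sqrt ρ / 2) ≤ B * s.re := mul_le_mul_of_nonneg_left hsre hB0
  have h6 : C' * Real.sqrt |(-ξ.im) - B*s.im| ≤ C' * ((2*C'+3) * Real.sqrt ρ) :=
    mul_le_mul_of_nonneg_left h4 hC'.le
  have hkey : C' * ((2*C'+3) * Real.sqrt ρ) + 1 ≤ B * (Real.sqrt ρ / 2) := by
    rw [hB]; nlinarith
  linarith

lemma my_core_vanish {H : ℂ → ℂ} {A C₀ A' C' M : ℝ}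
    (hC₀ : 0 < C₀) (hCC : C₀ ≤ C') (hAA : A' ≤ A)
    (hd : DifferentiableOn ℂ H (Om A C₀))
    (hM : ∀ w ∈ Om A' C', ‖H w‖ ≤ M)
    (hflat : ∀ ν : ℝ, 0 < ν → ∃ K R : ℝ, ∀ x : ℝ, x < R → ‖H (x:ℂ)‖ ≤ K * Real.exp (ν * x)) :
    ∀ w ∈ Om A C₀, H w = 0 := by
  have hC' : 0 < C' := lt_of_lt_of_le hC₀ hCC
  set B : ℝ := (2*C'+2)^2 with hB
  have hB0 : (0:ℝ) ≤ B := by positivity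
  set ψ : ℂ → ℂ := fun ξ => ((A' - 1 : ℝ) : ℂ) - ξ - ((B : ℝ):ℂ) * (ξ + 1) ^ (1/2:ℂ) with hψ
  have hmap : ∀ ξ : ℂ, 0 ≤ ξ.re → ψ ξ ∈ Om A' C' := fun ξ hξ => my_psi_maps hC' hξ
  have hsub : Om A' C' ⊆ Om A C₀ := Om_mono hAA hCC
  have hψd : ∀ ξ : ℂ, 0 ≤ ξ.re → DifferentiableAt ℂ ψ ξ := by
    intro ξ hξ
    have hd1 : HasDerivAt (fun ξ : ℂ => ξ + 1) 1 ξ := (hasDerivAt_id ξ).add_const 1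
    have hsp : ξ + 1 ∈ Complex.slitPlane := Or.inl (by simp [Complex.add_re]; linarith)
    have h1 : DifferentiableAt ℂ (fun ξ : ℂ => (ξ + 1) ^ (1/2:ℂ)) ξ :=
      (hd1.cpow_const hsp).differentiableAt
    exact ((differentiableAt_const _).sub differentiableAt_fun_id).sub (h1.const_mul _)
  set G : ℂ → ℂ := fun ξ => H (ψ ξ) with hG
  have hGdiff : ∀ ξ : ℂ, 0 ≤ ξ.re → DifferentiableAt ℂ G ξ := fun ξ hξ =>
    (hd.differentiableAt ((Om_open A C₀).mem_nhds (hsub (hmap ξ hξ)))).comp ξ (hψd ξ hξ)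
  have hGd : DiffContOnCl ℂ G {ξ : ℂ | 0 < ξ.re} := by
    refine ⟨fun ξ hξ => (hGdiff ξ (le_of_lt hξ)).differentiableWithinAt, ?_⟩
    rw [closure_setOf_lt_re]
    exact fun ξ hξ => (hGdiff ξ hξ).continuousAt.continuousWithinAt
  have hM0 : 0 ≤ M := le_trans (norm_nonneg _) (hM ((A'-1:ℝ):ℂ) (real_mem_Om _ (by linarith)))
  have him : ∀ x : ℝ, ‖G ((x:ℂ) * I)‖ ≤ M := fun x => hM _ (hmap _ (by simp))
  have hψx : ∀ x : ℝ, 0 ≤ x → ψ (x:ℂ) = ((A' - 1 - x - B * Real.sqrt (x+1) : ℝ) : ℂ) := by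
    intro x hx
    simp only [hψ]
    rw [show ((x:ℂ) + 1) = (((x + 1 : ℝ)):ℂ) by push_cast; ring,
      show ((1:ℂ)/2) = (((1:ℝ)/2 : ℝ) : ℂ) by norm_num,
      ← Complex.ofReal_cpow (by linarith : (0:ℝ) ≤ x + 1), ← Real.sqrt_eq_rpow]
    push_cast; ring
  have hre : Asymptotics.SuperpolynomialDecay atTop Real.exp fun x : ℝ => ‖G x‖ := by
    intro n
    obtain ⟨K, R, hKR⟩ := hflat (n+1) (by positivity)
    have hK0 : 0 ≤ K := by
      have h := le_trans (norm_nonneg _) (hKR (R-1) (by linarith))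
      nlinarith [Real.exp_pos ((n+1 : ℝ) * (R-1))]
    apply squeeze_zero' (Filter.Eventually.of_forall fun x => by positivity)
      (g := fun x : ℝ => (K * Real.exp ((n+1)*(A'-1))) * Real.exp (-x))
    · filter_upwards [eventually_gt_atTop (max 0 (A' - R))] with x hx
      have hx0 : 0 ≤ x := le_of_lt (lt_of_le_of_lt (le_max_left _ _) hx)
      have hxR : A' - R < x := lt_of_le_of_lt (le_max_right _ _) hx
      have hsq : 0 ≤ Real.sqrt (x+1) := Real.sqrt_nonneg _
      have hρR : A' - 1 - x - B * Real.sqrt (x+1) < R := by nlinarith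
      have hbd := hKR _ hρR
      have hGeq : ‖G (x:ℂ)‖ = ‖H (((A' - 1 - x - B * Real.sqrt (x+1) : ℝ)):ℂ)‖ := by
        simp only [hG]; rw [hψx x hx0]
      calc Real.exp x ^ n * ‖G (x:ℂ)‖
          ≤ Real.exp x ^ n * (K * Real.exp ((n+1) * (A' - 1 - x - B * Real.sqrt (x+1)))) := by
            apply mul_le_mul_of_nonneg_left _ (by positivity)
            rw [hGeq]; exact hbd
        _ ≤ (K * Real.exp ((n+1)*(A'-1))) * Real.exp (-x) := by
            rw [← Real.exp_nat_mul]
            have h7 : Real.exp ((n:ℝ)*x) * Real.exp (((n:ℝ)+1) * (A' - 1 - x - B * Real.sqrt (x+1)))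
                ≤ Real.exp (((n:ℝ)+1)*(A'-1)) * Real.exp (-x) := by
              rw [← Real.exp_add, ← Real.exp_add]
              apply Real.exp_le_exp.mpr
              nlinarith [mul_nonneg (by positivity : (0:ℝ) ≤ (n:ℝ)+1) (mul_nonneg hB0 hsq)]
            calc Real.exp ((n:ℝ)*x) * (K * Real.exp (((n:ℝ)+1) * (A' - 1 - x - B * Real.sqrt (x+1))))
                = K * (Real.exp ((n:ℝ)*x) * Real.exp (((n:ℝ)+1) * (A' - 1 - x - B * Real.sqrt (x+1)))) := by ring
              _ ≤ K * (Real.exp (((n:ℝ)+1)*(A'-1)) * Real.exp (-x)) := mul_le_mul_of_nonneg_left h7 hK0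
              _ = (K * Real.exp (((n:ℝ)+1)*(A'-1))) * Real.exp (-x) := by ring
    · simpa using (Real.tendsto_exp_neg_atTop_nhds_zero.const_mul (K * Real.exp ((n+1)*(A'-1))))
  have hzero : Set.EqOn G 0 {ξ : ℂ | 0 ≤ ξ.re} := by
    refine PhragmenLindelof.eq_zero_on_right_half_plane_of_superexponential_decay hGd
      ⟨1, one_lt_two, 0, ?_⟩ hre ⟨M, him⟩
    apply Asymptotics.IsBigO.of_bound M
    filter_upwards [Filter.mem_inf_of_right (Filter.mem_principal_self _)] with ξ hξ
    simp only [zero_mul, Real.exp_zero, norm_one, mul_one]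
    exact hM _ (hmap ξ (le_of_lt hξ))
  set φ : ℝ → ℂ := fun t => ((A' - 1 - t - B * Real.sqrt (t+1) : ℝ) : ℂ) with hφ
  have hφcont : Continuous φ := by
    apply Complex.continuous_ofReal.comp
    fun_prop
  have hmono : ∀ t : ℝ, 1 < t → (φ t).re < (φ 1).re := by
    intro t ht
    simp only [hφ, Complex.ofReal_re]
    have h1 : Real.sqrt (1+1) ≤ Real.sqrt (t+1) := Real.sqrt_le_sqrt (by linarith)
    nlinarith [mul_le_mul_of_nonneg_left h1 hB0]
  have htend : Filter.Tendsto φ (nhdsWithin 1 (Set.Ioi (1:ℝ))) (nhdsWithin (φ 1) {w : ℂ | w ≠ φ 1}) := by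
    rw [tendsto_nhdsWithin_iff]
    constructor
    · exact (hφcont.tendsto 1).mono_left nhdsWithin_le_nhds
    · filter_upwards [self_mem_nhdsWithin] with t ht
      exact fun h => absurd (congrArg Complex.re h) (ne_of_lt (hmono t ht))
  have hfreq : ∃ᶠ w in nhdsWithin (φ 1) {w : ℂ | w ≠ φ 1}, H w = 0 := by
    apply htend.frequently
    apply Filter.Eventually.frequently
    filter_upwards [self_mem_nhdsWithin] with t (ht : 1 < t)
    have h0 := hzero (show (t:ℂ) ∈ {ξ : ℂ | 0 ≤ ξ.re} by simp; linarith)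
    have h0' : G (t:ℂ) = 0 := h0
    rw [hG] at h0'
    simp only [hφ]
    rw [← hψx t (by linarith)]
    exact h0'
  have hφ1 : φ 1 ∈ Om A C₀ := by
    simp only [hφ]
    rw [← hψx 1 zero_le_one]
    exact hsub (hmap 1 (by simp))
  have han : AnalyticOnNhd ℂ H (Om A C₀) := hd.analyticOnNhd (Om_open A C₀)
  exact fun w hw =>
    han.eqOn_zero_of_preconnected_of_frequently_eq_zero (Om_preconnected (le_of_lt hC₀)) hφ1 hfreq hw

lemma my_diff_conj {m : ℕ} {f : (Fin m → ℂ) → ℂ} {s : Set (Fin m → ℂ)}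
    (hs : IsOpen s) (hf : DifferentiableOn ℂ f s)
    (hsym : ∀ z ∈ s, (fun i => (starRingEnd ℂ) (z i)) ∈ s) :
    DifferentiableOn ℂ (fun z => (starRingEnd ℂ) (f (fun i => (starRingEnd ℂ) (z i)))) s := by
  intro z₀ hz₀
  apply DifferentiableAt.differentiableWithinAt
  set σCLM : (Fin m → ℂ) →L[ℝ] (Fin m → ℂ) :=
    ContinuousLinearMap.pi
      (fun i => Complex.conjCLE.toContinuousLinearMap.comp (ContinuousLinearMap.proj i)) with hσ
  have hfa : DifferentiableAt ℂ f (fun i => (starRingEnd ℂ) (z₀ i)) :=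
    hf.differentiableAt (hs.mem_nhds (hsym z₀ hz₀))
  set L : (Fin m → ℂ) →L[ℂ] ℂ := fderiv ℂ f (fun i => (starRingEnd ℂ) (z₀ i)) with hL
  have hLd : HasFDerivAt f L (fun i => (starRingEnd ℂ) (z₀ i)) := hfa.hasFDerivAt
  set Mlin : (Fin m → ℂ) →ₗ[ℂ] ℂ :=
    { toFun := fun v => (starRingEnd ℂ) (L (fun i => (starRingEnd ℂ) (v i)))
      map_add' := by
        intro u v
        have h1 : (fun i => (starRingEnd ℂ) ((u + v) i))
            = (fun i => (starRingEnd ℂ) (u i)) + (fun i => (starRingEnd ℂ) (v i)) := by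
          funext i; simp
        show (starRingEnd ℂ) (L fun i => (starRingEnd ℂ) ((u + v) i)) = _
        rw [h1, map_add, map_add]
      map_smul' := by
        intro c v
        have h1 : (fun i => (starRingEnd ℂ) ((c • v) i))
            = ((starRingEnd ℂ) c) • (fun i => (starRingEnd ℂ) (v i)) := by
          funext i; simp [Pi.smul_apply, smul_eq_mul]
        show (starRingEnd ℂ) (L fun i => (starRingEnd ℂ) ((c • v) i))
            = c • (starRingEnd ℂ) (L fun i => (starRingEnd ℂ) (v i))
        rw [h1, map_smul, smul_eq_mul, map_mul, Complex.conj_conj, smul_eq_mul] } with hMlin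
  set M : (Fin m → ℂ) →L[ℂ] ℂ := LinearMap.toContinuousLinearMap Mlin with hM
  have hσd : HasFDerivAt (fun z : Fin m → ℂ => (fun i => (starRingEnd ℂ) (z i))) σCLM z₀ :=
    σCLM.hasFDerivAt
  have h2 : HasFDerivAt (fun z : Fin m → ℂ => f (fun i => (starRingEnd ℂ) (z i)))
      ((L.restrictScalars ℝ).comp σCLM) z₀ := (hLd.restrictScalars ℝ).comp z₀ hσd
  have hconjd : HasFDerivAt (fun w : ℂ => (starRingEnd ℂ) w)
      Complex.conjCLE.toContinuousLinearMap (f (fun i => (starRingEnd ℂ) (z₀ i))) :=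
    Complex.conjCLE.toContinuousLinearMap.hasFDerivAt
  have h3 : HasFDerivAt (fun z : Fin m → ℂ => (starRingEnd ℂ) (f (fun i => (starRingEnd ℂ) (z i))))
      (Complex.conjCLE.toContinuousLinearMap.comp ((L.restrictScalars ℝ).comp σCLM)) z₀ :=
    hconjd.comp z₀ h2
  have h4 : HasFDerivAt (fun z : Fin m → ℂ => (starRingEnd ℂ) (f (fun i => (starRingEnd ℂ) (z i))))
      M z₀ := hasFDerivAt_of_restrictScalars ℝ h3 (by ext v; rfl)
  exact h4.differentiableAt

lemma my_conj_sum {m : ℕ} (a : (Fin m → ℝ) → ℂ) (hreal : ∀ α, (a α).im = 0)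
    (F : Finset (Fin m → ℝ)) (z : Fin m → ℂ) :
    (starRingEnd ℂ) (∑ α ∈ F, a α * expMono α z) =
      ∑ α ∈ F, a α * expMono α (fun i => (starRingEnd ℂ) (z i)) := by
  rw [map_sum]
  apply Finset.sum_congr rfl
  intro α _
  rw [map_mul, show (starRingEnd ℂ) (a α) = a α from Complex.conj_eq_iff_im.mpr (hreal α)]
  congr 1
  rw [expMono, expMono, ← Complex.exp_conj, map_sum]
  congr 1
  apply Finset.sum_congr rfl
  intro i _
  rw [map_mul, Complex.conj_ofReal]

lemma my_eNorm_conj {m : ℕ} (z : Fin m → ℂ) :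
    eNorm (fun i => (starRingEnd ℂ) (z i)) = eNorm z := by
  unfold eNorm; simp [Complex.conj_re]

lemma my_QDom_conj {m : ℕ} {c C : ℝ} {z : Fin m → ℂ} (hz : z ∈ QDom c C m) :
    (fun i => (starRingEnd ℂ) (z i)) ∈ QDom c C m := by
  intro i
  have := hz i
  simpa [SQD, Complex.conj_re, Complex.conj_im, abs_neg] using this

lemma my_SQD_open (c C : ℝ) : IsOpen (SQD c C) :=
  isOpen_lt Complex.continuous_re (by fun_prop)

lemma my_QDom_open (c C : ℝ) (m : ℕ) : IsOpen (QDom c C m) := by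
  have h : QDom c C m = ⋂ i, (fun z : Fin m → ℂ => z i) ⁻¹' SQD c C := by
    ext z; simp [QDom, Set.mem_iInter]
  rw [h]
  exact isOpen_iInter_of_finite fun i => (my_SQD_open c C).preimage (continuous_apply i)

lemma my_eNorm_line {m : ℕ} (z : Fin m → ℂ) (w : ℂ) :
    eNorm (fun i => z i + w) = Real.exp w.re * eNorm z := by
  unfold eNorm
  rw [show ∑ i, Real.exp ((z i + w).re)^2 = Real.exp w.re ^ 2 * ∑ i, Real.exp ((z i).re)^2 by
    rw [Finset.mul_sum]
    apply Finset.sum_congr rfl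
    intro i _
    rw [Complex.add_re, Real.exp_add]
    ring]
  rw [Real.sqrt_mul (by positivity), Real.sqrt_sq (Real.exp_nonneg _)]

end Aux

/-- Reality: if `f` is holomorphic on `Ω(c,C)^m` with an asymptotic
expansion all of whose coefficients are real, then `f` commutes with complex conjugation;
in particular `f` is real-valued at real points of `Ω(c,C)^m`. -/
theorem stmt16 (m : ℕ) (c C : ℝ) (hc : 0 < c) (hC : 0 < C)
    (f : (Fin m → ℂ) → ℂ) (hf : DifferentiableOn ℂ f (QDom c C m))
    (a : (Fin m → ℝ) → ℂ) (ha : HasAsymExp c C f a)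
    (hreal : ∀ α, (a α).im = 0) :
    (∀ z ∈ QDom c C m, f (fun i => starRingEnd ℂ (z i)) = starRingEnd ℂ (f z)) ∧
    (∀ z ∈ QDom c C m, (∀ i, (z i).im = 0) → (f z).im = 0) := by
  obtain ⟨hnat, hexp⟩ := ha
  have hQo : IsOpen (QDom c C m) := my_QDom_open c C m
  set g : (Fin m → ℂ) → ℂ := fun u => (starRingEnd ℂ) (f (fun i => (starRingEnd ℂ) (u i))) with hg
  have hgd : DifferentiableOn ℂ g (QDom c C m) :=
    my_diff_conj hQo hf (fun u hu => my_QDom_conj hu)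
  -- the generic estimate for ‖f - g‖ coming from the shared asymptotic expansion
  have hbound : ∀ ν : ℝ, 0 < ν → ∀ c' C' : ℝ, ∀ F : Finset (Fin m → ℝ), ∀ δ : ℝ,
      (∀ u ∈ QDom c' C' m, eNorm u < δ →
        ‖f u - ∑ α ∈ F, a α * expMono α u‖ ≤ 1 * eNorm u ^ ν) →
      ∀ u ∈ QDom c' C' m, eNorm u < δ → ‖f u - g u‖ ≤ 2 * eNorm u ^ ν := by
    intro ν hν c' C' F δ hb u hu hδ
    have h1 := hb u hu hδ
    have hσu : (fun i => (starRingEnd ℂ) (u i)) ∈ QDom c' C' m := my_QDom_conj hu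
    have h2 := hb _ hσu (by rwa [my_eNorm_conj])
    have h3 : g u - (∑ α ∈ F, a α * expMono α u)
        = (starRingEnd ℂ) (f (fun i => (starRingEnd ℂ) (u i))
            - ∑ α ∈ F, a α * expMono α (fun i => (starRingEnd ℂ) (u i))) := by
      rw [map_sub, my_conj_sum a hreal F (fun i => (starRingEnd ℂ) (u i))]
      have hσσ : (fun i => (starRingEnd ℂ) ((fun j : Fin m => (starRingEnd ℂ) (u j)) i)) = u := by
        funext i; simp
      rw [hσσ]
    have h4 : ‖g u - ∑ α ∈ F, a α * expMono α u‖
        = ‖f (fun i => (starRingEnd ℂ) (u i))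
            - ∑ α ∈ F, a α * expMono α (fun i => (starRingEnd ℂ) (u i))‖ := by
      rw [h3, RCLike.norm_conj]
    rw [my_eNorm_conj] at h2
    have h5 : ‖f u - g u‖ ≤ ‖f u - ∑ α ∈ F, a α * expMono α u‖
        + ‖g u - ∑ α ∈ F, a α * expMono α u‖ := by
      have heq : f u - g u = (f u - ∑ α ∈ F, a α * expMono α u)
          - (g u - ∑ α ∈ F, a α * expMono α u) := by ring
      rw [heq]
      exact norm_sub_le _ _
    rw [h4] at h5
    linarith
  -- key claim
  have key : ∀ z ∈ QDom c C m, f z = g z := by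
    intro z hz
    rcases Nat.eq_zero_or_pos m with hm | hm
    · -- m = 0 : direct
      subst hm
      obtain ⟨c', C', hc', hC', hsub, F, hF, hb'⟩ := hexp 1 one_pos
      obtain ⟨δ, hδ, hb⟩ := hb' 1 one_pos
      have hu : z ∈ QDom c' C' 0 := fun i => i.elim0
      have hE : eNorm z = 0 := by unfold eNorm; simp
      have h := hbound 1 one_pos c' C' F δ hb z hu (by rw [hE]; exact hδ)
      rw [hE, Real.zero_rpow one_ne_zero, mul_zero] at h
      have := norm_le_zero_iff.mp h
      exact sub_eq_zero.mp this
    · -- m ≥ 1 : via the one-variable quasianalyticity argument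
      haveI : Nonempty (Fin m) := ⟨⟨0, hm⟩⟩
      have hE0 : 0 < eNorm z :=
        Real.sqrt_pos.mpr (Finset.sum_pos (fun i _ => by positivity) Finset.univ_nonempty)
      set zl : ℂ → (Fin m → ℂ) := fun w => fun i => z i + w with hzl
      -- membership of the shifted line in smaller quadratic domains
      have hQmem : ∀ (c' C' : ℝ), 0 ≤ C' → ∀ w : ℂ,
          w.re < (Finset.univ.inf' Finset.univ_nonempty
              fun i => Real.log c' - (z i).re - C' * Real.sqrt |(z i).im|)
            - C' * Real.sqrt |w.im| →
          zl w ∈ QDom c' C' m := by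
        intro c' C' hC'0 w hw i
        have h2 : (Finset.univ.inf' Finset.univ_nonempty
            fun i => Real.log c' - (z i).re - C' * Real.sqrt |(z i).im|)
            ≤ Real.log c' - (z i).re - C' * Real.sqrt |(z i).im| :=
          Finset.inf'_le _ (Finset.mem_univ i)
        have h4 : Real.sqrt |(z i).im + w.im| ≤ Real.sqrt |(z i).im| + Real.sqrt |w.im| :=
          my_sqrt_abs_add _ _
        show (z i + w).re < Real.log c' - C' * Real.sqrt |(z i + w).im|
        rw [Complex.add_re, Complex.add_im]
        nlinarith [mul_le_mul_of_nonneg_left h4 hC'0]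
      have hgood : ∀ c' C' δ : ℝ, 0 < C' → 0 < δ → ∃ A₀ : ℝ, ∀ w : ℂ, w ∈ Om A₀ C' →
          (zl w ∈ QDom c' C' m ∧ eNorm (zl w) < δ) := by
        intro c' C' δ hC'0 hδ
        refine ⟨min (Finset.univ.inf' Finset.univ_nonempty
            fun i => Real.log c' - (z i).re - C' * Real.sqrt |(z i).im|)
          (Real.log δ - Real.log (eNorm z)), fun w hw => ⟨?_, ?_⟩⟩
        · apply hQmem c' C' hC'0.le
          have h1 : w.re < min _ _ - C' * Real.sqrt |w.im| := hw
          have h2 := min_le_left (Finset.univ.inf' Finset.univ_nonempty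
            fun i => Real.log c' - (z i).re - C' * Real.sqrt |(z i).im|)
            (Real.log δ - Real.log (eNorm z))
          linarith
        · rw [my_eNorm_line]
          have h1 : w.re < min _ _ - C' * Real.sqrt |w.im| := hw
          have h2 := min_le_right (Finset.univ.inf' Finset.univ_nonempty
            fun i => Real.log c' - (z i).re - C' * Real.sqrt |(z i).im|)
            (Real.log δ - Real.log (eNorm z))
          have h3 : 0 ≤ C' * Real.sqrt |w.im| :=
            mul_nonneg hC'0.le (Real.sqrt_nonneg _)
          have h5 : w.re < Real.log δ - Real.log (eNorm z) := by linarith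
          have h6 : Real.exp w.re < Real.exp (Real.log δ - Real.log (eNorm z)) :=
            Real.exp_lt_exp.mpr h5
          rw [Real.exp_sub, Real.exp_log hδ, Real.exp_log hE0] at h6
          calc Real.exp w.re * eNorm z < (δ / eNorm z) * eNorm z :=
                mul_lt_mul_of_pos_right h6 hE0
            _ = δ := by field_simp
      -- the big domain
      set Astar : ℝ := Finset.univ.inf' Finset.univ_nonempty
        fun i => Real.log c - (z i).re - C * Real.sqrt |(z i).im| with hAst
      have hAstar : 0 < Astar := by
        rw [hAst, Finset.lt_inf'_iff]
        intro i _
        have := hz i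
        have h1 : (z i).re < Real.log c - C * Real.sqrt |(z i).im| := this
        linarith
      have hlineQ : ∀ w ∈ Om Astar C, zl w ∈ QDom c C m := fun w hw =>
        hQmem c C hC.le w hw
      set h : ℂ → ℂ := fun w => f (zl w) - g (zl w) with hh
      have hHd : DifferentiableOn ℂ h (Om Astar C) := by
        intro w hw
        apply DifferentiableAt.differentiableWithinAt
        have hzld : DifferentiableAt ℂ zl w :=
          differentiableAt_pi.mpr fun i => (differentiableAt_const _).add differentiableAt_fun_id
        exact ((hf.differentiableAt (hQo.mem_nhds (hlineQ w hw))).comp w hzld).sub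
          ((hgd.differentiableAt (hQo.mem_nhds (hlineQ w hw))).comp w hzld)
      -- a uniform bound from the ν = 1 instance
      obtain ⟨c₁, C₁, hc₁, hC₁, hsub₁, F₁, hF₁, hb₁'⟩ := hexp 1 one_pos
      obtain ⟨δ₁, hδ₁, hb₁⟩ := hb₁' 1 one_pos
      obtain ⟨A₁, hA₁⟩ := hgood c₁ C₁ δ₁ hC₁ hδ₁
      have hM : ∀ w ∈ Om (min Astar A₁) (max C C₁), ‖h w‖ ≤ 2 * δ₁ := by
        intro w hw
        have hw1 : w ∈ Om A₁ C₁ := Om_mono (min_le_right _ _) (le_max_right _ _) hw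
        obtain ⟨hq, he⟩ := hA₁ w hw1
        have hbd := hbound 1 one_pos c₁ C₁ F₁ δ₁ hb₁ (zl w) hq he
        rw [Real.rpow_one] at hbd
        have hEnn : 0 ≤ eNorm (zl w) := Real.sqrt_nonneg _
        calc ‖h w‖ = ‖f (zl w) - g (zl w)‖ := rfl
          _ ≤ 2 * eNorm (zl w) := hbd
          _ ≤ 2 * δ₁ := by linarith
      -- flatness on the real axis
      have hflat : ∀ ν : ℝ, 0 < ν → ∃ K R : ℝ, ∀ x : ℝ, x < R →
          ‖h (x:ℂ)‖ ≤ K * Real.exp (ν * x) := by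
        intro ν hν
        obtain ⟨c', C', hc', hC', hsub', F', hF', hb''⟩ := hexp ν hν
        obtain ⟨δ, hδ, hb'⟩ := hb'' 1 one_pos
        obtain ⟨A₀, hA₀⟩ := hgood c' C' δ hC' hδ
        refine ⟨2 * eNorm z ^ ν, A₀, fun x hx => ?_⟩
        have hwom : ((x:ℝ):ℂ) ∈ Om A₀ C' := real_mem_Om x hx
        obtain ⟨hq, he⟩ := hA₀ _ hwom
        have hbd := hbound ν hν c' C' F' δ hb' (zl x) hq he
        have hEeq : eNorm (zl ((x:ℝ):ℂ)) = Real.exp x * eNorm z := by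
          rw [hzl, my_eNorm_line]; simp
        rw [hEeq] at hbd
        have h1 : (Real.exp x * eNorm z) ^ ν = Real.exp (ν * x) * eNorm z ^ ν := by
          rw [Real.mul_rpow (Real.exp_nonneg _) (le_of_lt hE0), ← Real.exp_mul, mul_comm x ν]
        calc ‖h ((x:ℝ):ℂ)‖ = ‖f (zl ((x:ℝ):ℂ)) - g (zl ((x:ℝ):ℂ))‖ := rfl
          _ ≤ 2 * ((Real.exp x * eNorm z) ^ ν) := hbd
          _ = (2 * eNorm z ^ ν) * Real.exp (ν * x) := by rw [h1]; ring
      -- conclude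
      have hvan := my_core_vanish hC (le_max_left C C₁) (min_le_left Astar A₁) hHd hM hflat
      have h0mem : (0:ℂ) ∈ Om Astar C := by
        show (0:ℂ).re < Astar - C * Real.sqrt |(0:ℂ).im|
        simp [hAstar]
      have hzero := hvan 0 h0mem
      have hzl0 : zl 0 = z := funext fun i => add_zero _
      simp only [hh, hzl0] at hzero
      exact sub_eq_zero.mp hzero
  constructor
  · intro z hz
    have h1 := key z hz
    have h2 : (starRingEnd ℂ) (f z) = (starRingEnd ℂ) (g z) := by rw [h1]
    rw [show g z = (starRingEnd ℂ) (f (fun i => (starRingEnd ℂ) (z i))) from rfl,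
      Complex.conj_conj] at h2
    exact h2.symm
  · intro z hz hzre
    have h1 := key z hz
    have hσz : (fun i => (starRingEnd ℂ) (z i)) = z :=
      funext fun i => Complex.conj_eq_iff_im.mpr (hzre i)
    have h2 : g z = (starRingEnd ℂ) (f z) := by
      show (starRingEnd ℂ) (f (fun i => (starRingEnd ℂ) (z i))) = _
      rw [hσz]
    rw [h2] at h1
    exact Complex.conj_eq_iff_im.mp h1.symm
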